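/- Let N ≥ k ≥ 1 and let L = lcm(N, k), M = k·C(N,k)/L. Then the family of all k-subsets of [N] can be partitioned into M classes 𝒮₁, …, 𝒮_M, each of size L/k, such that every element j ∈ [N] belongs to exactly L/N sets of each class 𝒮ᵢ. -/

import Mathlib

open Finset

lemma eq_of_sum_le' {ι : Type*} [Fintype ι] (f t : ι → ℕ)
    (hle : ∀ i, f i ≤ t i) (hsum : ∑ i, t i ≤ ∑ i, f i) : ∀ i, f i = t i := by
  intro i
  by_contra h
  have h1 : f i < t i := lt_of_le_of_ne (hle i) h
  have : ∑ j, f j < ∑ j, t j :=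
    Finset.sum_lt_sum (fun j _ => hle j) ⟨i, mem_univ i, h1⟩
  omega

lemma hall_of_fractional {α β : Type*} [Fintype α] [Fintype β] [DecidableEq β]
    (t : α → Finset β) (μ : α → β → ℚ)
    (h0 : ∀ a b, 0 ≤ μ a b)
    (hz : ∀ a b, b ∉ t a → μ a b = 0)
    (hrow : ∀ a, ∑ b ∈ t a, μ a b = 1)
    (hcol : ∀ b, ∑ a, μ a b ≤ 1) :
    ∃ f : α → β, Function.Injective f ∧ ∀ x, f x ∈ t x := by
  rw [← Finset.all_card_le_biUnion_card_iff_exists_injective]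
  intro A
  have key : (A.card : ℚ) ≤ ((A.biUnion t).card : ℚ) := by
    calc (A.card : ℚ) = ∑ a ∈ A, ∑ b ∈ t a, μ a b := by
          rw [show ∑ a ∈ A, ∑ b ∈ t a, μ a b = ∑ a ∈ A, (1:ℚ) from
            Finset.sum_congr rfl (fun a _ => hrow a)]
          simp
      _ = ∑ a ∈ A, ∑ b ∈ A.biUnion t, μ a b := by
          exact Finset.sum_congr rfl (fun a ha =>
            (Finset.sum_subset (Finset.subset_biUnion_of_mem t ha)
              (fun b _ hb => hz a b hb)))
      _ = ∑ b ∈ A.biUnion t, ∑ a ∈ A, μ a b := Finset.sum_comm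
      _ ≤ ∑ b ∈ A.biUnion t, (1 : ℚ) := by
          refine Finset.sum_le_sum (fun b _ => ?_)
          calc ∑ a ∈ A, μ a b ≤ ∑ a, μ a b :=
                Finset.sum_le_sum_of_subset_of_nonneg (Finset.subset_univ A)
                  (fun a _ _ => h0 a b)
            _ ≤ 1 := hcol b
      _ = ((A.biUnion t).card : ℚ) := by simp
  exact_mod_cast key

lemma splitting {ι τ : Type*} [Fintype ι] [Fintype τ] [DecidableEq ι] [DecidableEq τ]
    (B : ι → τ → ℕ) (w : τ → ℚ) (n r : ℕ) (t : τ → ℕ)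
    (hw : ∀ S, (∃ i, B i S ≠ 0) → 0 ≤ w S ∧ w S ≤ 1)
    (hn : ∀ i, ∑ S, B i S = n)
    (hrow : ∀ i, ∑ S, (B i S : ℚ) * w S = r)
    (ht : ∀ S, ((∑ i, B i S : ℕ) : ℚ) * w S = t S) :
    ∃ a : ι → τ → ℕ, (∀ i S, a i S ≤ B i S) ∧ (∀ i, ∑ S, a i S = r) ∧
      (∀ S, ∑ i, a i S = t S) := by
  classical
  rcases isEmpty_or_nonempty ι with hι | hι
  · refine ⟨fun _ _ => 0, fun i => (hι.false i).elim, fun i => (hι.false i).elim, fun S => ?_⟩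
    have h := ht S
    have h2 : (∑ i, B i S) = 0 := by simp
    rw [h2] at h
    have : ((t S : ℚ)) = 0 := by simpa using h.symm
    exact_mod_cast (by simp : (∑ i : ι, (fun _ _ => (0:ℕ)) i S) = 0).trans (by exact_mod_cast this.symm)
  obtain ⟨i₀⟩ := hι
  -- basic facts
  have hrn : (r : ℚ) ≤ (n : ℚ) := by
    rw [← hrow i₀]
    calc ∑ S, (B i₀ S : ℚ) * w S ≤ ∑ S, (B i₀ S : ℚ) := by
          refine Finset.sum_le_sum (fun S _ => ?_)
          by_cases hB : B i₀ S = 0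
          · simp [hB]
          · have := (hw S ⟨i₀, hB⟩).2
            nlinarith [Nat.cast_nonneg (α := ℚ) (B i₀ S)]
      _ = (n : ℚ) := by rw [← hn i₀]; push_cast; ring
  have hrn' : r ≤ n := by exact_mod_cast hrn
  have hcast : ((n - r : ℕ) : ℚ) = (n : ℚ) - r := by
    push_cast [hrn']; ring
  have hw1sum : ∀ i, ∑ S, (B i S : ℚ) * (1 - w S) = (n : ℚ) - r := by
    intro i
    have : ∑ S, (B i S : ℚ) * (1 - w S) = (∑ S, (B i S : ℚ)) - ∑ S, (B i S : ℚ) * w S := by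
      rw [← Finset.sum_sub_distrib]; congr 1; ext S; ring
    rw [this, hrow i]
    congr 1
    rw [← hn i]; push_cast; ring
  have hnr0 : n = r → ∀ i S, B i S ≠ 0 → w S = 1 := by
    intro hnr i S hB
    have h0 : ∑ S, (B i S : ℚ) * (1 - w S) = 0 := by rw [hw1sum i, hnr]; ring
    have hterm : ∀ S' ∈ univ, 0 ≤ (B i S' : ℚ) * (1 - w S') := by
      intro S' _
      by_cases hB' : B i S' = 0
      · simp [hB']
      · have := (hw S' ⟨i, hB'⟩).2
        have : (0:ℚ) ≤ 1 - w S' := by linarith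
        positivity
    have := (Finset.sum_eq_zero_iff_of_nonneg hterm).1 h0 S (mem_univ S)
    have hBpos : (0:ℚ) < B i S := by exact_mod_cast Nat.pos_of_ne_zero hB
    have h1w : (1:ℚ) - w S = 0 := by
      rcases mul_eq_zero.1 this with h | h
      · exact absurd h (ne_of_gt hBpos)
      · exact h
    linarith
  have hwz : ∀ S i, B i S ≠ 0 → t S = 0 → w S = 0 := by
    intro S i hB ht0
    have h := ht S
    rw [ht0] at h
    have hBpos : 0 < ∑ i, B i S :=
      lt_of_lt_of_le (Nat.pos_of_ne_zero hB)
        (Finset.single_le_sum (f := fun i => B i S) (fun _ _ => Nat.zero_le _) (mem_univ i))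
    have hne : ((∑ i, B i S : ℕ) : ℚ) ≠ 0 := by
      exact_mod_cast Nat.pos_iff_ne_zero.1 hBpos
    have h' : ((∑ i, B i S : ℕ) : ℚ) * w S = 0 := by simpa using h
    rcases mul_eq_zero.1 h' with h'' | h''
    · exact absurd h'' hne
    · exact h''
  -- the bipartite Hall instance
  let β : Type _ := ((S : τ) × Fin (t S)) ⊕ ((i : ι) × Fin (n - r))
  let A : Type _ := (p : ι × τ) × Fin (B p.1 p.2)
  let adj : A → Finset β := fun x =>
    (univ.image (fun j : Fin (t x.1.2) => (Sum.inl ⟨x.1.2, j⟩ : β))) ∪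
    (univ.image (fun j : Fin (n - r) => (Sum.inr ⟨x.1.1, j⟩ : β)))
  let μ : A → β → ℚ := fun x b =>
    Sum.rec (fun p => if p.1 = x.1.2 then w x.1.2 / t x.1.2 else 0)
      (fun q => if q.1 = x.1.1 then (1 - w x.1.2) / ((n:ℚ) - r) else 0) b
  have hBx : ∀ x : A, B x.1.1 x.1.2 ≠ 0 := fun x => Nat.pos_iff_ne_zero.1 x.2.pos
  have hwx : ∀ x : A, 0 ≤ w x.1.2 ∧ w x.1.2 ≤ 1 := fun x => hw _ ⟨x.1.1, hBx x⟩
  have h0 : ∀ x b, 0 ≤ μ x b := by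
    intro x b
    rcases b with p | q
    · simp only [μ]
      split
      · apply div_nonneg (hwx x).1 (by positivity)
      · exact le_refl 0
    · simp only [μ]
      split
      · apply div_nonneg (by linarith [(hwx x).2]) (by linarith [hrn])
      · exact le_refl 0
  have hz : ∀ x b, b ∉ adj x → μ x b = 0 := by
    intro x b hb
    rcases b with ⟨pS, pj⟩ | ⟨qi, qj⟩
    · simp only [μ]
      split
      · next hEq =>
        exfalso; apply hb
        simp only [adj, mem_union, mem_image]
        subst hEq
        exact Or.inl ⟨pj, mem_univ _, rfl⟩
      · rfl
    · simp only [μ]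
      split
      · next hEq =>
        exfalso; apply hb
        simp only [adj, mem_union, mem_image]
        subst hEq
        exact Or.inr ⟨qj, mem_univ _, rfl⟩
      · rfl
  have hrowmu : ∀ x : A, ∑ b ∈ adj x, μ x b = 1 := by
    rintro ⟨⟨i, S⟩, idx⟩
    have hdisj : Disjoint
        (univ.image (fun j : Fin (t S) => (Sum.inl ⟨S, j⟩ : β)))
        (univ.image (fun j : Fin (n - r) => (Sum.inr ⟨i, j⟩ : β))) := by
      simp [Finset.disjoint_left]
    rw [show adj ⟨(i,S), idx⟩ = _ ∪ _ from rfl, Finset.sum_union hdisj]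
    rw [Finset.sum_image (by intro a _ b _ h; simpa using h),
        Finset.sum_image (by intro a _ b _ h; simpa using h)]
    have e1 : ∀ j : Fin (t S), μ ⟨(i,S),idx⟩ (Sum.inl ⟨S, j⟩) = w S / t S := by
      intro j; simp [μ]
    have e2 : ∀ j : Fin (n - r), μ ⟨(i,S),idx⟩ (Sum.inr ⟨i, j⟩)
        = (1 - w S) / ((n:ℚ) - r) := by
      intro j; simp [μ]
    rw [Finset.sum_congr rfl (fun j _ => e1 j), Finset.sum_congr rfl (fun j _ => e2 j),
        Finset.sum_const, Finset.sum_const]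
    simp only [card_univ, Fintype.card_fin, nsmul_eq_mul]
    rw [hcast]
    have hB : B i S ≠ 0 := hBx ⟨(i,S), idx⟩
    have hw01 := hw S ⟨i, hB⟩
    by_cases ht0 : t S = 0
    · have w0 : w S = 0 := hwz S i hB ht0
      by_cases hnr : (n:ℚ) - r = 0
      · exfalso
        have hn' : n = r := by
          have := sub_eq_zero.1 hnr
          exact_mod_cast this
        have := hnr0 hn' i S hB
        rw [w0] at this; norm_num at this
      · rw [ht0, w0]; push_cast; field_simp; norm_num
    · have htQ : (t S : ℚ) ≠ 0 := by exact_mod_cast ht0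
      by_cases hnr : (n:ℚ) - r = 0
      · have hn' : n = r := by
          have := sub_eq_zero.1 hnr
          exact_mod_cast this
        have w1 : w S = 1 := hnr0 hn' i S hB
        rw [hnr, w1]
        field_simp
        simp
      · field_simp
        ring
  have sumA : ∀ f : A → ℚ,
      ∑ x : A, f x = ∑ i, ∑ S, ∑ idx : Fin (B i S), f ⟨(i,S), idx⟩ := by
    intro f
    rw [← Finset.univ_sigma_univ, Finset.sum_sigma, Fintype.sum_prod_type]
  have hcolmu : ∀ b : β, ∑ x : A, μ x b ≤ 1 := by
    intro b
    rcases b with ⟨S, j⟩ | ⟨i, j⟩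
    · have htpos : t S ≠ 0 := Nat.pos_iff_ne_zero.1 j.pos
      have htQ : (t S : ℚ) ≠ 0 := by exact_mod_cast htpos
      have key : ∑ x : A, μ x (Sum.inl ⟨S, j⟩) = ∑ i, (B i S : ℚ) * (w S / t S) := by
        rw [sumA]
        refine Finset.sum_congr rfl (fun i _ => ?_)
        have inner : ∀ S', ∑ idx : Fin (B i S'), μ ⟨(i,S'),idx⟩ (Sum.inl ⟨S,j⟩)
            = if S = S' then (B i S' : ℚ) * (w S' / t S') else 0 := by
          intro S'
          have : ∀ idx : Fin (B i S'), μ ⟨(i,S'),idx⟩ (Sum.inl ⟨S,j⟩)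
              = if S = S' then w S' / t S' else 0 := fun idx => by
            by_cases h : S = S'
            · subst h; simp [μ]
            · simp [μ, h]
          rw [Finset.sum_congr rfl (fun idx _ => this idx), Finset.sum_const]
          simp only [card_univ, Fintype.card_fin, nsmul_eq_mul]
          split <;> simp
        rw [Finset.sum_congr rfl (fun S' _ => inner S'), Finset.sum_ite_eq]
        simp
      rw [key, ← Finset.sum_mul]
      have : (∑ i, (B i S : ℚ)) = ((∑ i, B i S : ℕ) : ℚ) := by push_cast; rfl
      rw [this]
      have : ((∑ i, B i S : ℕ) : ℚ) * (w S / t S) = (((∑ i, B i S : ℕ) : ℚ) * w S) / t S := by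
        ring
      rw [this, ht S, div_self htQ]
    · have hnrpos : n - r ≠ 0 := Nat.pos_iff_ne_zero.1 j.pos
      have hnrQ : (n:ℚ) - r ≠ 0 := by
        rw [← hcast]
        exact_mod_cast hnrpos
      have key : ∑ x : A, μ x (Sum.inr ⟨i, j⟩)
          = ∑ i', if i = i' then (((n:ℚ) - r) / ((n:ℚ) - r)) else 0 := by
        rw [sumA]
        refine Finset.sum_congr rfl (fun i' _ => ?_)
        have inner : ∀ S', ∑ idx : Fin (B i' S'), μ ⟨(i',S'),idx⟩ (Sum.inr ⟨i,j⟩)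
            = if i = i' then (B i' S' : ℚ) * ((1 - w S') / ((n:ℚ) - r)) else 0 := by
          intro S'
          have : ∀ idx : Fin (B i' S'), μ ⟨(i',S'),idx⟩ (Sum.inr ⟨i,j⟩)
              = if i = i' then (1 - w S') / ((n:ℚ) - r) else 0 := fun idx => by
            by_cases h : i = i'
            · subst h; simp [μ]
            · simp [μ, h]
          rw [Finset.sum_congr rfl (fun idx _ => this idx), Finset.sum_const]
          simp only [card_univ, Fintype.card_fin, nsmul_eq_mul]
          split <;> simp
        rw [Finset.sum_congr rfl (fun S' _ => inner S')]
        by_cases hii : i = i'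
        · rw [if_pos hii]
          rw [Finset.sum_congr rfl (fun S' _ => if_pos hii)]
          rw [Finset.sum_congr rfl (fun S' _ =>
            show (B i' S' : ℚ) * ((1 - w S') / ((n:ℚ) - r))
              = ((B i' S' : ℚ) * (1 - w S')) / ((n:ℚ) - r) from by ring)]
          rw [← Finset.sum_div, hw1sum i']
        · rw [if_neg hii]
          rw [Finset.sum_congr rfl (fun S' _ => if_neg hii)]
          simp
      rw [key, Finset.sum_ite_eq]
      simp [div_self hnrQ]
  obtain ⟨F, Finj, Fmem⟩ := hall_of_fractional adj μ h0 hz hrowmu hcolmu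
  have Fmem' : ∀ x : A, (∃ j : Fin (t x.1.2), F x = Sum.inl ⟨x.1.2, j⟩) ∨
      (∃ j : Fin (n - r), F x = Sum.inr ⟨x.1.1, j⟩) := by
    intro x
    have hx := Fmem x
    simp only [adj, mem_union, mem_image, mem_univ, true_and] at hx
    rcases hx with ⟨j, hj⟩ | ⟨j, hj⟩
    · exact Or.inl ⟨j, hj.symm⟩
    · exact Or.inr ⟨j, hj.symm⟩
  let a : ι → τ → ℕ := fun i S =>
    (univ.filter (fun idx : Fin (B i S) => (F ⟨(i,S), idx⟩).isLeft = true)).card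
  have ha_le : ∀ i S, a i S ≤ B i S := by
    intro i S
    calc a i S ≤ (univ : Finset (Fin (B i S))).card := Finset.card_filter_le _ _
      _ = B i S := by simp
  have sumA' : ∀ f : A → ℕ,
      ∑ x : A, f x = ∑ i, ∑ S, ∑ idx : Fin (B i S), f ⟨(i,S), idx⟩ := by
    intro f
    rw [← Finset.univ_sigma_univ, Finset.sum_sigma, Fintype.sum_prod_type]
  -- column bounds
  have hcol_le : ∀ S, ∑ i, a i S ≤ t S := by
    intro S
    have hJ : ∑ i, a i S
        = (univ.filter (fun x : A => x.1.2 = S ∧ (F x).isLeft = true)).card := by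
      refine Eq.symm ?_
      rw [Finset.card_filter, sumA']
      have inner : ∀ i S' , (∑ idx : Fin (B i S'),
          if S' = S ∧ (F ⟨(i,S'), idx⟩).isLeft = true then 1 else 0)
          = if S' = S then a i S' else 0 := by
        intro i S'
        by_cases h : S' = S
        · subst h
          simp only [true_and, eq_self_iff_true, if_true]
          exact (Finset.card_filter _ _).symm
        · simp [h]
      rw [Finset.sum_congr rfl (fun i (_ : i ∈ univ) =>
        Finset.sum_congr rfl (fun S' (_ : S' ∈ univ) => inner i S'))]
      rw [Finset.sum_congr rfl (fun i (_ : i ∈ univ) => Finset.sum_ite_eq' univ S (a i))]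
      simp
    rw [hJ]
    have hinj : Function.Injective (fun j : Fin (t S) => (Sum.inl ⟨S, j⟩ : β)) := by
      intro j j' h
      simpa using h
    calc (univ.filter (fun x : A => x.1.2 = S ∧ (F x).isLeft = true)).card
        ≤ (univ.image (fun j : Fin (t S) => (Sum.inl ⟨S, j⟩ : β))).card := by
          refine Finset.card_le_card_of_injOn F ?_ (Finj.injOn)
          intro x hx
          simp only [mem_coe, mem_filter, mem_univ, true_and] at hx
          obtain ⟨hx1, hx2⟩ := hx
          subst hx1
          rcases Fmem' x with ⟨j, hj⟩ | ⟨j, hj⟩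
          · rw [mem_coe, mem_image]
            exact ⟨j, mem_univ _, hj.symm⟩
          · rw [hj] at hx2
            simp at hx2
      _ = t S := by
          rw [Finset.card_image_of_injective _ hinj]; simp
  -- row bounds
  have hrow_ge : ∀ i, r ≤ ∑ S, a i S := by
    intro i
    have hR : ∑ S, (B i S - a i S)
        = (univ.filter (fun x : A => x.1.1 = i ∧ (F x).isLeft = false)).card := by
      refine Eq.symm ?_
      rw [Finset.card_filter, sumA']
      have inner : ∀ i', (∑ S', ∑ idx : Fin (B i' S'),
          if i' = i ∧ (F ⟨(i',S'), idx⟩).isLeft = false then 1 else 0)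
          = if i' = i then ∑ S', (B i' S' - a i' S') else 0 := by
        intro i'
        by_cases h : i' = i
        · subst h
          simp only [true_and, eq_self_iff_true, if_true]
          refine Finset.sum_congr rfl (fun S' _ => ?_)
          rw [← Finset.card_filter]
          have hsplit := Finset.card_filter_add_card_filter_not
            (s := (univ : Finset (Fin (B i' S'))))
            (p := fun idx => (F ⟨(i',S'), idx⟩).isLeft = true)
          have hco : (univ.filter (fun idx : Fin (B i' S') => ¬ (F ⟨(i',S'), idx⟩).isLeft = true))
              = (univ.filter (fun idx : Fin (B i' S') => (F ⟨(i',S'), idx⟩).isLeft = false)) :=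
            Finset.filter_congr (fun idx _ => by simp)
          rw [hco] at hsplit
          have hcard : (univ : Finset (Fin (B i' S'))).card = B i' S' := by simp
          have ha : (univ.filter (fun idx : Fin (B i' S') =>
              (F ⟨(i',S'), idx⟩).isLeft = true)).card = a i' S' := rfl
          omega
        · simp [h]
      rw [Finset.sum_congr rfl (fun i' (_ : i' ∈ univ) => inner i')]
      rw [Finset.sum_ite_eq' univ i (fun i' => ∑ S', (B i' S' - a i' S'))]
      simp
    have hinj : Function.Injective (fun j : Fin (n - r) => (Sum.inr ⟨i, j⟩ : β)) := by
      intro j j' h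
      simpa using h
    have hRle : ∑ S, (B i S - a i S) ≤ n - r := by
      rw [hR]
      calc (univ.filter (fun x : A => x.1.1 = i ∧ (F x).isLeft = false)).card
          ≤ (univ.image (fun j : Fin (n - r) => (Sum.inr ⟨i, j⟩ : β))).card := by
            refine Finset.card_le_card_of_injOn F ?_ (Finj.injOn)
            intro x hx
            simp only [mem_coe, mem_filter, mem_univ, true_and] at hx
            obtain ⟨hx1, hx2⟩ := hx
            subst hx1
            rcases Fmem' x with ⟨j, hj⟩ | ⟨j, hj⟩
            · rw [hj] at hx2
              simp at hx2
            · rw [mem_coe, mem_image]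
              exact ⟨j, mem_univ _, hj.symm⟩
        _ = n - r := by
            rw [Finset.card_image_of_injective _ hinj]; simp
    have hsum2 : ∑ S, a i S + ∑ S, (B i S - a i S) = n := by
      rw [← Finset.sum_add_distrib, ← hn i]
      refine Finset.sum_congr rfl (fun S _ => ?_)
      have := ha_le i S
      omega
    omega
  -- total of t
  have htot : ∑ S, t S = Fintype.card ι * r := by
    have hQ : (∑ S, (t S : ℚ)) = (Fintype.card ι : ℚ) * r := by
      rw [Finset.sum_congr rfl (fun S _ => (ht S).symm)]
      rw [Finset.sum_congr rfl (fun S (_ : S ∈ univ) => by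
        rw [Nat.cast_sum, Finset.sum_mul] :
        ∀ S ∈ univ, ((∑ i, B i S : ℕ) : ℚ) * w S = ∑ i, (B i S : ℚ) * w S)]
      rw [Finset.sum_comm]
      rw [Finset.sum_congr rfl (fun i _ => hrow i)]
      simp [mul_comm]
    exact_mod_cast hQ
  have hswap : ∑ i, ∑ S, a i S = ∑ S, ∑ i, a i S := Finset.sum_comm
  have hub : ∑ i, ∑ S, a i S ≤ Fintype.card ι * r := by
    rw [hswap, ← htot]
    exact Finset.sum_le_sum (fun S _ => hcol_le S)
  have hrows : ∀ i, (fun _ : ι => r) i = ∑ S, a i S := by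
    refine eq_of_sum_le' (fun _ => r) (fun i => ∑ S, a i S) hrow_ge ?_
    calc ∑ i, ∑ S, a i S ≤ Fintype.card ι * r := hub
      _ = ∑ _i : ι, r := by simp [mul_comm]
  have hcols : ∀ S, ∑ i, a i S = t S := by
    refine eq_of_sum_le' (fun S => ∑ i, a i S) t hcol_le (le_of_eq ?_)
    calc ∑ S, t S = Fintype.card ι * r := htot
      _ = ∑ _i : ι, r := by simp [mul_comm]
      _ = ∑ i, ∑ S, a i S := Finset.sum_congr rfl (fun i _ => hrows i)
      _ = ∑ S, ∑ i, a i S := hswap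
  exact ⟨a, ha_le, fun i => (hrows i).symm, hcols⟩

lemma card_val_lt (N m : ℕ) (h : m ≤ N) :
    (univ.filter (fun j : Fin N => (j : ℕ) < m)).card = m := by
  rw [Finset.card_filter]
  rw [Fin.sum_univ_eq_sum_range (fun x => if x < m then 1 else 0) N]
  rw [← Finset.sum_subset (Finset.range_subset_range.2 h)
    (f := fun x => if x < m then 1 else 0)
    (by intro x _ hx; rw [Finset.mem_range] at hx; simp [hx])]
  rw [Finset.sum_congr rfl (fun x hx => if_pos (Finset.mem_range.1 hx))]
  simp

lemma sum_insert_erase {N : ℕ} (e : Fin N) (G : Finset (Fin N) → ℕ) :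
    (∑ S ∈ univ.filter (fun S : Finset (Fin N) => e ∈ S), G (S.erase e))
      = ∑ S ∈ univ.filter (fun S : Finset (Fin N) => e ∉ S), G S := by
  refine Finset.sum_nbij' (fun S => S.erase e) (fun S => insert e S) ?_ ?_ ?_ ?_ ?_
  · intro S hS
    simp only [mem_filter, mem_univ, true_and] at hS ⊢
    exact Finset.notMem_erase e S
  · intro S hS
    simp only [mem_filter, mem_univ, true_and] at hS ⊢
    exact Finset.mem_insert_self e S
  · intro S hS
    simp only [mem_filter, mem_univ, true_and] at hS
    exact Finset.insert_erase hS
  · intro S hS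
    simp only [mem_filter, mem_univ, true_and] at hS
    exact Finset.erase_insert hS
  · intro S _
    rfl

lemma exists_partition_aux (N k M : ℕ) (hk : 1 ≤ k) (hkN : k ≤ N)
    (hMn : M * (N / N.gcd k) = N.choose k) (hkn : k * (N / N.gcd k) = N * (k / N.gcd k))
    (m : ℕ) (hm : m ≤ N) :
    ∃ B : Fin M → Finset (Fin N) → ℕ,
      (∀ i S, B i S ≠ 0 → (∀ j ∈ S, (j : ℕ) < m) ∧ S.card ≤ k) ∧
      (∀ S : Finset (Fin N), (∀ j ∈ S, (j : ℕ) < m) → S.card ≤ k →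
        ∑ i, B i S = (N - m).choose (k - S.card)) ∧
      (∀ i, ∑ S, B i S = N / N.gcd k) ∧
      (∀ i, ∀ j : Fin N, (j : ℕ) < m →
        (∑ S, if j ∈ S then B i S else 0) = k / N.gcd k) := by
  induction m with
  | zero =>
    refine ⟨fun _ S => if S = ∅ then N / N.gcd k else 0, ?_, ?_, ?_, ?_⟩
    · intro i S hS
      by_cases h : S = ∅
      · subst h
        exact ⟨fun j hj => absurd hj (by simp), by simp⟩
      · simp [h] at hS
    · intro S hsub hcard
      have hS : S = ∅ := by
        by_contra h
        obtain ⟨j, hj⟩ := Finset.nonempty_iff_ne_empty.2 h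
        exact Nat.not_lt_zero _ (hsub j hj)
      subst hS
      rw [Finset.sum_congr rfl (fun i (_ : i ∈ (univ : Finset (Fin M))) => if_pos rfl)]
      rw [Finset.sum_const, card_univ, Fintype.card_fin, smul_eq_mul, hMn]
      simp
    · intro i
      rw [Finset.sum_ite_eq' univ (∅ : Finset (Fin N)) (fun _ => N / N.gcd k)]
      simp
    · intro i j hj
      exact absurd hj (Nat.not_lt_zero _)
  | succ m ih =>
    have hmN : m < N := hm
    obtain ⟨B, Hsupp, Htot, Hsize, Hdeg⟩ := ih (Nat.le_of_succ_le hm)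
    set g := N.gcd k with hg
    set n' := N / g with hn'
    set k' := k / g with hk'
    have hNm : 0 < N - m := by omega
    -- weights and targets
    set w : Finset (Fin N) → ℚ := fun S => ((k - S.card : ℕ) : ℚ) / ((N - m : ℕ) : ℚ) with hw_def
    set t : Finset (Fin N) → ℕ := fun S =>
      if (∀ j ∈ S, (j : ℕ) < m) ∧ S.card < k then (N - m - 1).choose (k - S.card - 1) else 0
      with ht_def
    have hNmQ : ((N - m : ℕ) : ℚ) ≠ 0 := by exact_mod_cast Nat.pos_iff_ne_zero.1 hNm
    -- hypotheses of `splitting`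
    have hw01 : ∀ S, (∃ i, B i S ≠ 0) → 0 ≤ w S ∧ w S ≤ 1 := by
      intro S ⟨i, hB⟩
      obtain ⟨hsub, hcard⟩ := Hsupp i S hB
      have htotS := Htot S hsub hcard
      have hpos : 0 < (N - m).choose (k - S.card) := by
        rw [← htotS]
        exact lt_of_lt_of_le (Nat.pos_of_ne_zero hB)
          (Finset.single_le_sum (f := fun i => B i S) (fun _ _ => Nat.zero_le _) (mem_univ i))
      have hle : k - S.card ≤ N - m := by
        by_contra h
        rw [Nat.choose_eq_zero_of_lt (by omega)] at hpos
        omega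
      constructor
      · apply div_nonneg <;> positivity
      · rw [div_le_one (by exact_mod_cast hNm)]
        exact_mod_cast hle
    have hrowQ : ∀ i : Fin M, ∑ S, (B i S : ℚ) * w S = (k' : ℚ) := by
      intro i
      have hcard_sum : ∑ S, B i S * S.card = m * k' := by
        have step1 : ∀ S : Finset (Fin N), B i S * S.card
            = ∑ j : Fin N, (if j ∈ S then B i S else 0) := by
          intro S
          rw [Finset.sum_ite_mem, Finset.univ_inter, Finset.sum_const, smul_eq_mul, mul_comm]
        rw [Finset.sum_congr rfl (fun S _ => step1 S), Finset.sum_comm]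
        have step2 : ∀ j : Fin N, (∑ S, if j ∈ S then B i S else 0)
            = if (j : ℕ) < m then k' else 0 := by
          intro j
          by_cases hj : (j : ℕ) < m
          · rw [if_pos hj]; exact Hdeg i j hj
          · rw [if_neg hj]
            refine Finset.sum_eq_zero (fun S _ => ?_)
            by_cases hjS : j ∈ S
            · rw [if_pos hjS]
              by_contra hB
              exact hj ((Hsupp i S hB).1 j hjS)
            · rw [if_neg hjS]
          
        rw [Finset.sum_congr rfl (fun j _ => step2 j)]
        rw [← Finset.sum_filter]
        rw [Finset.sum_const, smul_eq_mul, card_val_lt N m (Nat.le_of_succ_le hm)]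
      have hsplit : ∀ S : Finset (Fin N), B i S * (k - S.card) + B i S * S.card = B i S * k := by
        intro S
        by_cases hB : B i S = 0
        · simp [hB]
        · have := (Hsupp i S hB).2
          have : k - S.card + S.card = k := by omega
          rw [← Nat.mul_add, this]
      have hNum : ∑ S, B i S * (k - S.card) = (N - m) * k' := by
        have h1 : ∑ S, (B i S * (k - S.card) + B i S * S.card) = ∑ S, B i S * k :=
          Finset.sum_congr rfl (fun S _ => hsplit S)
        rw [Finset.sum_add_distrib, hcard_sum, ← Finset.sum_mul, Hsize i] at h1
        have h2 : n' * k = N * k' := by rw [mul_comm, hkn]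
        have h3 : (N - m) * k' + m * k' = N * k' := by
          rw [← Nat.add_mul, Nat.sub_add_cancel (le_of_lt hmN)]
        omega
      have cast1 : ∀ S : Finset (Fin N), (B i S : ℚ) * w S
          = ((B i S * (k - S.card) : ℕ) : ℚ) / ((N - m : ℕ) : ℚ) := by
        intro S
        simp only [hw_def]
        push_cast
        ring
      rw [Finset.sum_congr rfl (fun S _ => cast1 S), ← Finset.sum_div, ← Nat.cast_sum, hNum]
      push_cast
      field_simp
    have htQ : ∀ S : Finset (Fin N), ((∑ i, B i S : ℕ) : ℚ) * w S = (t S : ℚ) := by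
      intro S
      by_cases hgood : (∀ j ∈ S, (j : ℕ) < m) ∧ S.card ≤ k
      · obtain ⟨hsub, hcard⟩ := hgood
        rw [Htot S hsub hcard]
        by_cases hck : S.card = k
        · have : (k - S.card : ℕ) = 0 := by omega
          have ht0 : t S = 0 := by rw [ht_def]; simp [hck]
          rw [ht0]
          simp only [hw_def]
          rw [show ((k - S.card : ℕ) : ℚ) = 0 from by rw [this]; simp]
          simp
        · have hck' : S.card < k := by omega
          have ht1 : t S = (N - m - 1).choose (k - S.card - 1) := by
            rw [ht_def]; simp only [if_pos (And.intro hsub hck')]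
          rw [ht1]
          simp only [hw_def]
          have habs : (N - m) * (N - m - 1).choose (k - S.card - 1)
              = (N - m).choose (k - S.card) * (k - S.card) := by
            have e1 : N - m = (N - m - 1) + 1 := by omega
            have e2 : k - S.card = (k - S.card - 1) + 1 := by omega
            rw [e1, e2]
            exact Nat.add_one_mul_choose_eq (N - m - 1) (k - S.card - 1)
          have : ((N - m).choose (k - S.card) : ℚ) * (((k - S.card : ℕ) : ℚ) / ((N - m : ℕ) : ℚ))
              = (((N - m).choose (k - S.card) * (k - S.card) : ℕ) : ℚ) / ((N - m : ℕ) : ℚ) := by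
            push_cast; ring
          rw [this, ← habs]
          push_cast
          field_simp
      · have hzero : ∀ i : Fin M, B i S = 0 := by
          intro i
          by_contra hB
          exact hgood (Hsupp i S hB)
        have ht0 : t S = 0 := by
          have hng : ¬ ((∀ j ∈ S, (j : ℕ) < m) ∧ S.card < k) := fun h => hgood ⟨h.1, le_of_lt h.2⟩
          simp only [ht_def]
          rw [if_neg hng]
        rw [ht0, Finset.sum_congr rfl (fun i _ => hzero i)]
        simp
    obtain ⟨a, ha_le, harow, hacol⟩ := splitting B w n' k' t hw01 Hsize hrowQ htQ
    set e : Fin N := ⟨m, hmN⟩ with he_def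
    have heval : (e : ℕ) = m := rfl
    have hBe : ∀ i S, e ∈ S → B i S = 0 := by
      intro i S heS
      by_contra hB
      have := (Hsupp i S hB).1 e heS
      omega
    have hae : ∀ i S, e ∈ S → a i S = 0 := by
      intro i S heS
      have := ha_le i S
      have := hBe i S heS
      omega
    have hta : ∀ i S, a i S ≠ 0 → t S ≠ 0 := by
      intro i S ha ht0
      have h1 : a i S ≤ ∑ i', a i' S :=
        Finset.single_le_sum (f := fun i' => a i' S) (fun _ _ => Nat.zero_le _) (mem_univ i)
      rw [hacol S, ht0] at h1
      omega
    have htne : ∀ S : Finset (Fin N), t S ≠ 0 → (∀ j ∈ S, (j : ℕ) < m) ∧ S.card < k := by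
      intro S htS
      by_contra h
      apply htS
      simp only [ht_def]
      rw [if_neg h]
    have hExt : ∀ (f : Fin M → Finset (Fin N) → ℕ), (∀ i S, e ∈ S → f i S = 0) →
        ∀ i, ∑ S ∈ univ.filter (fun S : Finset (Fin N) => e ∉ S), f i S = ∑ S, f i S := by
      intro f hf i
      refine Finset.sum_subset (Finset.filter_subset _ _) ?_
      intro S _ hS
      simp only [Finset.mem_filter, Finset.mem_univ, true_and, not_not] at hS
      exact hf i S hS
    refine ⟨fun i S => if e ∈ S then a i (S.erase e) else B i S - a i S, ?_, ?_, ?_, ?_⟩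
    · -- support
      intro i S hS
      by_cases heS : e ∈ S
      · replace hS : a i (S.erase e) ≠ 0 := by simpa [heS] using hS
        have haBe : a i (S.erase e) ≤ B i (S.erase e) := ha_le i _
        have hBne : B i (S.erase e) ≠ 0 := by omega
        obtain ⟨hsub, _⟩ := Hsupp i _ hBne
        have htne' := htne _ (hta i _ hS)
        constructor
        · intro j hj
          by_cases hje : j = e
          · subst hje; omega
          · have hjj : j ∈ S.erase e := Finset.mem_erase.2 ⟨hje, hj⟩
            have := hsub j hjj
            omega
        · have h1 : (S.erase e).card = S.card - 1 := Finset.card_erase_of_mem heS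
          have h2 : 0 < S.card := Finset.card_pos.2 ⟨e, heS⟩
          have h3 := htne'.2
          omega
      · replace hS : B i S - a i S ≠ 0 := by simpa [heS] using hS
        have haB := ha_le i S
        have hBne : B i S ≠ 0 := by omega
        obtain ⟨hsub, hcard⟩ := Hsupp i S hBne
        exact ⟨fun j hj => by have := hsub j hj; omega, hcard⟩
    · -- totals
      intro S hsub hcard
      by_cases heS : e ∈ S
      · have hrw : (∑ i, if e ∈ S then a i (S.erase e) else B i S - a i S)
            = ∑ i, a i (S.erase e) :=
          Finset.sum_congr rfl (fun i _ => if_pos heS)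
        rw [hrw, hacol]
        have hsub' : ∀ j ∈ S.erase e, (j : ℕ) < m := by
          intro j hj
          obtain ⟨hje, hjS⟩ := Finset.mem_erase.1 hj
          have h1 := hsub j hjS
          have h2 : (j : ℕ) ≠ m := by
            intro h
            exact hje (Fin.ext (by rw [h, heval]))
          omega
        have hpos : 0 < S.card := Finset.card_pos.2 ⟨e, heS⟩
        have hce : (S.erase e).card = S.card - 1 := Finset.card_erase_of_mem heS
        have hc2 : (S.erase e).card < k := by omega
        simp only [ht_def]
        rw [if_pos ⟨hsub', hc2⟩, hce]
        congr 1 <;> omega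
      · have hrw : (∑ i, if e ∈ S then a i (S.erase e) else B i S - a i S)
            = ∑ i, (B i S - a i S) :=
          Finset.sum_congr rfl (fun i _ => if_neg heS)
        rw [hrw]
        have hsub' : ∀ j ∈ S, (j : ℕ) < m := by
          intro j hj
          have h1 := hsub j hj
          have h2 : (j : ℕ) ≠ m := by
            intro h
            exact heS (by rwa [show j = e from Fin.ext (by rw [h, heval])] at hj)
          omega
        have hBS := Htot S hsub' hcard
        have haS := hacol S
        have hsum : ∑ i, (B i S - a i S) + ∑ i, a i S = ∑ i, B i S := by
          rw [← Finset.sum_add_distrib]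
          exact Finset.sum_congr rfl (fun i _ => by have := ha_le i S; omega)
        by_cases hck : S.card < k
        · have ht1 : t S = (N - m - 1).choose (k - S.card - 1) := by
            simp only [ht_def]; rw [if_pos ⟨hsub', hck⟩]
          obtain ⟨d', hd'⟩ : ∃ d', N - m = d' + 1 := ⟨N - m - 1, by omega⟩
          obtain ⟨c', hc'⟩ : ∃ c', k - S.card = c' + 1 := ⟨k - S.card - 1, by omega⟩
          have hpascal : (N - m).choose (k - S.card) = d'.choose c' + d'.choose (c' + 1) := by
            rw [hd', hc']
            exact Nat.choose_succ_succ d' c'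
          have ht1' : t S = d'.choose c' := by
            rw [ht1]; congr 1 <;> omega
          have hfin : (N - (m + 1)).choose (k - S.card) = d'.choose (c' + 1) := by
            rw [hc', show N - (m + 1) = d' from by omega]
          rw [hfin]
          omega
        · have hck' : S.card = k := by omega
          have ht1 : t S = 0 := by
            simp only [ht_def]
            rw [if_neg (fun h => absurd h.2 (by omega))]
          have h0 : k - S.card = 0 := by omega
          have h0' : k - S.card = 0 → (N - m).choose (k - S.card) = 1 := by
            intro h; rw [h]; simp
          have h0'' : (N - (m+1)).choose (k - S.card) = 1 := by rw [h0]; simp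
          have := h0' h0
          rw [this] at hBS
          omega
    · -- sizes
      intro i
      rw [← Finset.sum_filter_add_sum_filter_not univ (fun S => e ∈ S)]
      have h1 : ∑ S ∈ univ.filter (fun S : Finset (Fin N) => e ∈ S),
          (if e ∈ S then a i (S.erase e) else B i S - a i S)
          = ∑ S ∈ univ.filter (fun S : Finset (Fin N) => e ∉ S), a i S := by
        have hrw : ∑ S ∈ univ.filter (fun S : Finset (Fin N) => e ∈ S),
            (if e ∈ S then a i (S.erase e) else B i S - a i S)
            = ∑ S ∈ univ.filter (fun S : Finset (Fin N) => e ∈ S), a i (S.erase e) :=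
          Finset.sum_congr rfl (fun S hS => if_pos (Finset.mem_filter.1 hS).2)
        rw [hrw]
        exact sum_insert_erase e (fun S' => a i S')
      have h2 : ∑ S ∈ univ.filter (fun S : Finset (Fin N) => ¬ e ∈ S),
          (if e ∈ S then a i (S.erase e) else B i S - a i S)
          = ∑ S ∈ univ.filter (fun S : Finset (Fin N) => e ∉ S), (B i S - a i S) :=
        Finset.sum_congr rfl (fun S hS => if_neg (Finset.mem_filter.1 hS).2)
      rw [h1, h2, hExt a hae i,
        hExt (fun i S => B i S - a i S) (fun i S heS => by simp [hBe i S heS, hae i S heS]) i]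
      have h5 : ∑ S, a i S + ∑ S, (B i S - a i S) = ∑ S, B i S := by
        rw [← Finset.sum_add_distrib]
        exact Finset.sum_congr rfl (fun S _ => by have := ha_le i S; omega)
      have h6 := Hsize i
      have h7 := harow i
      have hkn2 : k' ≤ n' := Nat.div_le_div_right hkN
      omega
    · -- degrees
      intro i j hj
      rw [← Finset.sum_filter_add_sum_filter_not univ (fun S => e ∈ S)]
      by_cases hje : j = e
      · subst hje
        have h1 : ∑ S ∈ univ.filter (fun S : Finset (Fin N) => e ∈ S),
            (if e ∈ S then (if e ∈ S then a i (S.erase e) else B i S - a i S) else 0)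
            = ∑ S ∈ univ.filter (fun S : Finset (Fin N) => e ∉ S), a i S := by
          have hrw : ∑ S ∈ univ.filter (fun S : Finset (Fin N) => e ∈ S),
              (if e ∈ S then (if e ∈ S then a i (S.erase e) else B i S - a i S) else 0)
              = ∑ S ∈ univ.filter (fun S : Finset (Fin N) => e ∈ S), a i (S.erase e) :=
            Finset.sum_congr rfl (fun S hS => by simp [(Finset.mem_filter.1 hS).2])
          rw [hrw]
          exact sum_insert_erase e (fun S' => a i S')
        have h2 : ∑ S ∈ univ.filter (fun S : Finset (Fin N) => ¬ e ∈ S),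
            (if e ∈ S then (if e ∈ S then a i (S.erase e) else B i S - a i S) else 0)
            = 0 :=
          Finset.sum_eq_zero (fun S hS => by simp [(Finset.mem_filter.1 hS).2])
        rw [h1, h2]
        rw [hExt a hae i, harow i]
        simp
      · have hjm : (j : ℕ) < m := by
          have h2 : (j : ℕ) ≠ m := by
            intro h
            exact hje (Fin.ext (by rw [h, heval]))
          omega
        have h1 : ∑ S ∈ univ.filter (fun S : Finset (Fin N) => e ∈ S),
            (if j ∈ S then (if e ∈ S then a i (S.erase e) else B i S - a i S) else 0)
            = ∑ S, (if j ∈ S then a i S else 0) := by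
          have step : ∀ S ∈ univ.filter (fun S : Finset (Fin N) => e ∈ S),
              (if j ∈ S then (if e ∈ S then a i (S.erase e) else B i S - a i S) else 0)
              = (fun S' => if j ∈ S' then a i S' else 0) (S.erase e) := by
            intro S hS
            have heS := (Finset.mem_filter.1 hS).2
            by_cases hjS : j ∈ S
            · simp only [if_pos hjS, if_pos heS,
                if_pos (Finset.mem_erase.2 ⟨hje, hjS⟩)]
            · simp only [if_neg hjS,
                if_neg (fun hc => hjS (Finset.mem_of_mem_erase hc))]
          rw [Finset.sum_congr rfl step]
          rw [sum_insert_erase e (fun S' => if j ∈ S' then a i S' else 0)]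
          exact hExt (fun i S => if j ∈ S then a i S else 0) (fun i S heS => by
            by_cases hjS : j ∈ S
            · simp [hjS, hae i S heS]
            · simp [hjS]) i
        have h2 : ∑ S ∈ univ.filter (fun S : Finset (Fin N) => ¬ e ∈ S),
            (if j ∈ S then (if e ∈ S then a i (S.erase e) else B i S - a i S) else 0)
            = ∑ S, (if j ∈ S then B i S - a i S else 0) := by
          have hrw : ∑ S ∈ univ.filter (fun S : Finset (Fin N) => ¬ e ∈ S),
              (if j ∈ S then (if e ∈ S then a i (S.erase e) else B i S - a i S) else 0)
              = ∑ S ∈ univ.filter (fun S : Finset (Fin N) => e ∉ S),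
                (if j ∈ S then B i S - a i S else 0) :=
            Finset.sum_congr rfl (fun S hS => by
              simp only [if_neg (Finset.mem_filter.1 hS).2])
          rw [hrw]
          exact hExt (fun i S => if j ∈ S then B i S - a i S else 0) (fun i S heS => by
            by_cases hjS : j ∈ S
            · simp [hjS, hBe i S heS, hae i S heS]
            · simp [hjS]) i
        rw [h1, h2]
        have h5 : ∑ S, (if j ∈ S then a i S else 0) + ∑ S, (if j ∈ S then B i S - a i S else 0)
            = ∑ S, (if j ∈ S then B i S else 0) := by
          rw [← Finset.sum_add_distrib]
          refine Finset.sum_congr rfl (fun S _ => ?_)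
          have := ha_le i S
          by_cases hjS : j ∈ S
          · simp only [if_pos hjS]; omega
          · simp only [if_neg hjS]
        rw [h5]
        exact Hdeg i j hjm

/-- Baranyai-type partition: for `N ≥ k ≥ 1`, with `L = lcm(N,k)` and
`M = k·C(N,k)/L`, the `k`-subsets of `[N]` can be partitioned into `M` classes, each
of size `L/k`, such that every element lies in exactly `L/N` sets of each class. -/
theorem baranyai_partition (N k L M : ℕ) (hk : 1 ≤ k) (hkN : k ≤ N)
    (hL : L = Nat.lcm N k) (hM : M * L = k * Nat.choose N k) :
    ∃ 𝒮 : Fin M → Finset (Finset (Fin N)),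
      (∀ i, ∀ S ∈ 𝒮 i, S.card = k) ∧
      (∀ S : Finset (Fin N), S.card = k → ∃! i : Fin M, S ∈ 𝒮 i) ∧
      (∀ i, (𝒮 i).card = L / k) ∧
      (∀ i, ∀ j : Fin N, ((𝒮 i).filter (fun S => j ∈ S)).card = L / N) := by
  classical
  have hN : 0 < N := lt_of_lt_of_le hk hkN
  have hg1 : 0 < N.gcd k := Nat.gcd_pos_of_pos_right N hk
  have hgN : N.gcd k ∣ N := Nat.gcd_dvd_left N k
  have hgk : N.gcd k ∣ k := Nat.gcd_dvd_right N k
  have hgml : N.gcd k * L = N * k := by rw [hL]; exact Nat.gcd_mul_lcm N k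
  have hL1 : (N / N.gcd k) * k = L := by
    have h2 : (N / N.gcd k) * k * N.gcd k = L * N.gcd k := by
      calc (N / N.gcd k) * k * N.gcd k = (N / N.gcd k * N.gcd k) * k := by ring
        _ = N * k := by rw [Nat.div_mul_cancel hgN]
        _ = L * N.gcd k := by rw [← hgml]; ring
    exact Nat.eq_of_mul_eq_mul_right hg1 h2
  have hL2 : N * (k / N.gcd k) = L := by
    have h2 : N * (k / N.gcd k) * N.gcd k = L * N.gcd k := by
      calc N * (k / N.gcd k) * N.gcd k = N * (k / N.gcd k * N.gcd k) := by ring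
        _ = N * k := by rw [Nat.div_mul_cancel hgk]
        _ = L * N.gcd k := by rw [← hgml]; ring
    exact Nat.eq_of_mul_eq_mul_right hg1 h2
  have hLk : L / k = N / N.gcd k := by rw [← hL1, Nat.mul_div_cancel _ hk]
  have hLN : L / N = k / N.gcd k := by rw [← hL2, Nat.mul_div_cancel_left _ hN]
  have hMn : M * (N / N.gcd k) = N.choose k := by
    have h2 : M * (N / N.gcd k) * k = N.choose k * k := by
      calc M * (N / N.gcd k) * k = M * ((N / N.gcd k) * k) := by ring
        _ = M * L := by rw [hL1]
        _ = k * N.choose k := hM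
        _ = N.choose k * k := by ring
    exact Nat.eq_of_mul_eq_mul_right hk h2
  have hkn : k * (N / N.gcd k) = N * (k / N.gcd k) := by
    rw [mul_comm, hL1, hL2]
  obtain ⟨B, Hsupp, Htot, Hsize, Hdeg⟩ :=
    exists_partition_aux N k M hk hkN hMn hkn N (le_refl N)
  have hsubN : ∀ S : Finset (Fin N), ∀ j ∈ S, (j : ℕ) < N := fun S j _ => j.isLt
  have hfin : ∀ S : Finset (Fin N), S.card ≤ k →
      ∑ i, B i S = if S.card = k then 1 else 0 := by
    intro S hc
    rw [Htot S (hsubN S) hc]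
    by_cases h : S.card = k
    · rw [if_pos h]
      simp [h]
    · rw [if_neg h]
      have : 0 < k - S.card := by omega
      simp only [Nat.sub_self]
      exact Nat.choose_eq_zero_of_lt (by omega)
  have B01 : ∀ i S, B i S ≤ 1 := by
    intro i S
    by_cases hc : S.card ≤ k
    · have h1 : B i S ≤ ∑ i', B i' S :=
        Finset.single_le_sum (f := fun i' => B i' S) (fun _ _ => Nat.zero_le _) (mem_univ i)
      rw [hfin S hc] at h1
      split at h1 <;> omega
    · by_contra h
      have : B i S ≠ 0 := by omega
      exact hc (Hsupp i S this).2
  have hcardk : ∀ i S, B i S ≠ 0 → S.card = k := by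
    intro i S hB
    have hc := (Hsupp i S hB).2
    by_contra h
    have h1 : B i S ≤ ∑ i', B i' S :=
      Finset.single_le_sum (f := fun i' => B i' S) (fun _ _ => Nat.zero_le _) (mem_univ i)
    rw [hfin S hc, if_neg h] at h1
    omega
  refine ⟨fun i => univ.filter (fun S => B i S ≠ 0), ?_, ?_, ?_, ?_⟩
  · intro i S hS
    rw [Finset.mem_filter] at hS
    exact hcardk i S hS.2
  · intro S hSk
    have htot1 : ∑ i, B i S = 1 := by rw [hfin S hSk.le, if_pos hSk]
    have hex : ∃ i, B i S ≠ 0 := by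
      by_contra h
      push_neg at h
      rw [Finset.sum_congr rfl (fun i _ => h i)] at htot1
      simp at htot1
    obtain ⟨i, hi⟩ := hex
    refine ⟨i, by simp [hi], ?_⟩
    intro i' hi'
    rw [Finset.mem_filter] at hi'
    by_contra hne
    have hpair : ({i', i} : Finset (Fin M)).sum (fun i'' => B i'' S) ≤ ∑ i'', B i'' S :=
      Finset.sum_le_sum_of_subset (Finset.subset_univ _)
    rw [Finset.sum_pair hne, htot1] at hpair
    have := hi'.2
    omega
  · intro i
    rw [Finset.card_filter]
    have : ∀ S : Finset (Fin N), (if B i S ≠ 0 then 1 else 0) = B i S := by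
      intro S
      have := B01 i S
      by_cases h : B i S = 0 <;> simp [h] <;> omega
    rw [Finset.sum_congr rfl (fun S _ => this S), Hsize i, hLk]
  · intro i j
    rw [Finset.filter_filter, Finset.card_filter]
    have : ∀ S : Finset (Fin N), (if B i S ≠ 0 ∧ j ∈ S then 1 else 0)
        = (if j ∈ S then B i S else 0) := by
      intro S
      have := B01 i S
      by_cases h1 : B i S = 0 <;> by_cases h2 : j ∈ S <;> simp [h1, h2] <;> omega
    rw [Finset.sum_congr rfl (fun S _ => this S), Hdeg i j j.isLt, hLN]
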